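/- Let N_m : X → ℝ with N_m(x) ≥ 0 and D_m : X → ℝ with D_m(x) > 0 for all x ∈ X, m = 1, …, M. Define F(x) = Σ_m N_m(x)/D_m(x) and g(x, y) = Σ_m (2 y_m √(N_m(x)) − y_m² D_m(x)). Then for every x ∈ X, F(x) = max_{y ∈ ℝ^M} g(x, y), and this maximum is attained at y_m = √(N_m(x))/D_m(x). -/

import Mathlib

theorem quadratic_transform_sup
    (n M : ℕ) (X : Set (Fin n → ℝ)) (hne : X.Nonempty)
    (N D : Fin M → (Fin n → ℝ) → ℝ)
    (hN : ∀ m, ∀ x ∈ X, 0 ≤ N m x) (hD : ∀ m, ∀ x ∈ X, 0 < D m x) :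
    ∀ x ∈ X,
      (∀ y : Fin M → ℝ,
        ∑ m, (2 * y m * Real.sqrt (N m x) - (y m) ^ 2 * D m x) ≤
        ∑ m, N m x / D m x) ∧
      ∑ m, (2 * (Real.sqrt (N m x) / D m x) * Real.sqrt (N m x)
            - (Real.sqrt (N m x) / D m x) ^ 2 * D m x) =
        ∑ m, N m x / D m x := by
  intro x hx
  constructor
  · intro y
    apply Finset.sum_le_sum
    intro m _
    have hDm := hD m x hx
    have hNm := hN m x hx
    have hsq : Real.sqrt (N m x) ^ 2 = N m x := Real.sq_sqrt hNm
    have key : 0 ≤ (y m * D m x - Real.sqrt (N m x)) ^ 2 / D m x :=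
      div_nonneg (sq_nonneg _) hDm.le
    have expand : (y m * D m x - Real.sqrt (N m x)) ^ 2 / D m x =
        N m x / D m x - (2 * y m * Real.sqrt (N m x) - (y m) ^ 2 * D m x) := by
      field_simp
      ring_nf
      nlinarith [hsq]
    linarith [expand ▸ key]
  · apply Finset.sum_congr rfl
    intro m _
    have hDm := hD m x hx
    have hNm := hN m x hx
    have hsq : Real.sqrt (N m x) ^ 2 = N m x := Real.sq_sqrt hNm
    field_simp
    linear_combination hsq
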